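/- Assume p ≡ 3 (mod 4). Suppose λ ∈ K̄ has order 2 and there is an odd natural number n with λ(z) = −zⁿ for all z ∈ (ℤ/p)* and with (p − 1)/2 dividing n² − 1. Then n ≡ −1 (mod p − 1), λ is the map z ↦ −1/z, and in particular the map z ↦ −1/z belongs to G. -/

import Mathlib

instance (X : Type*) [DecidableEq X] : DecidableEq (OnePoint X) :=
  inferInstanceAs (DecidableEq (Option X))

/-- The translation `z ↦ z + a` on `ℤ/p ∪ {∞}`, fixing `∞`. -/
def ptrans (p : ℕ) (a : ZMod p) : Equiv.Perm (OnePoint (ZMod p)) :=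
  Equiv.optionCongr (Equiv.addRight a)

/-- The map `z ↦ a z` on `ℤ/p ∪ {∞}`, fixing `∞`, for `a ≠ 0`. -/
def pmul (p : ℕ) [Fact p.Prime] (a : ZMod p) (ha : a ≠ 0) : Equiv.Perm (OnePoint (ZMod p)) :=
  Equiv.optionCongr (Equiv.mulLeft₀ a ha)

/-- Multiplication by `a` extended to `ℤ/p ∪ {∞}` (with `a·∞ = ∞`). -/
def opSmul (p : ℕ) (a : ZMod p) : OnePoint (ZMod p) → OnePoint (ZMod p) :=
  fun x => Option.map (fun z => a * z) x

/-- Underlying function of the map `z ↦ -1/z`. -/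
def negInvFun (p : ℕ) : OnePoint (ZMod p) → OnePoint (ZMod p)
  | Option.none => Option.some (0 : ZMod p)
  | Option.some z => if z = 0 then Option.none else Option.some (-z⁻¹ : ZMod p)

/-- The permutation `z ↦ -1/z` of `ℤ/p ∪ {∞}` (sending `0 ↦ ∞` and `∞ ↦ 0`). -/
def negInvPerm (p : ℕ) [Fact p.Prime] : Equiv.Perm (OnePoint (ZMod p)) :=
  Function.Involutive.toPerm (negInvFun p) (by
    intro x
    match x with
    | Option.none => simp [negInvFun] <;> rfl
    | Option.some z =>
      by_cases hz : z = 0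
      · simp [negInvFun, hz] <;> rfl
      · have h1 : (-z⁻¹ : ZMod p) ≠ 0 := by simp [hz]
        simp [negInvFun, hz, h1, inv_neg, inv_inv] <;> rfl)

/-- The involution `(0 ∞)(1 3)(2 6)(4 5)`. -/
def inv1 (p : ℕ) : Equiv.Perm (OnePoint (ZMod p)) :=
  Equiv.swap ((0 : ZMod p) : OnePoint (ZMod p)) OnePoint.infty *
  Equiv.swap ((1 : ZMod p) : OnePoint (ZMod p)) ((3 : ZMod p) : OnePoint (ZMod p)) *
  Equiv.swap ((2 : ZMod p) : OnePoint (ZMod p)) ((6 : ZMod p) : OnePoint (ZMod p)) *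
  Equiv.swap ((4 : ZMod p) : OnePoint (ZMod p)) ((5 : ZMod p) : OnePoint (ZMod p))

/-- The involution `(0 ∞)(1 5)(2 3)(4 6)`. -/
def inv2 (p : ℕ) : Equiv.Perm (OnePoint (ZMod p)) :=
  Equiv.swap ((0 : ZMod p) : OnePoint (ZMod p)) OnePoint.infty *
  Equiv.swap ((1 : ZMod p) : OnePoint (ZMod p)) ((5 : ZMod p) : OnePoint (ZMod p)) *
  Equiv.swap ((2 : ZMod p) : OnePoint (ZMod p)) ((3 : ZMod p) : OnePoint (ZMod p)) *
  Equiv.swap ((4 : ZMod p) : OnePoint (ZMod p)) ((6 : ZMod p) : OnePoint (ZMod p))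

/-- The set of nonzero squares in `ℤ/p`. -/
def Rset (p : ℕ) : Set (ZMod p) := {a | a ≠ 0 ∧ IsSquare a}

/-- The set of nonsquares in `(ℤ/p)*`. -/
def Nset (p : ℕ) : Set (ZMod p) := {a | a ≠ 0 ∧ ¬ IsSquare a}

section ptransLemmas
variable (p : ℕ)

lemma ptrans_some (a z : ZMod p) : ptrans p a (OnePoint.some z) = OnePoint.some (z + a) := rfl

lemma ptrans_infty (a : ZMod p) : ptrans p a OnePoint.infty = OnePoint.infty := rfl

lemma ptrans_mul (a b : ZMod p) : ptrans p a * ptrans p b = ptrans p (a + b) := by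
  ext x
  cases x with
  | infty => rfl
  | coe z =>
    show (ptrans p a) ((ptrans p b) (OnePoint.some z)) = _
    rw [ptrans_some, ptrans_some, ptrans_some, add_assoc, add_comm b a]

lemma ptrans_zero : ptrans p 0 = 1 := by
  ext x
  cases x with
  | infty => rfl
  | coe z => show (ptrans p 0) (OnePoint.some z) = _; rw [ptrans_some]; simp

lemma ptrans_pow (k : ℕ) : (ptrans p 1) ^ k = ptrans p (k : ZMod p) := by
  induction k with
  | zero => simpa using (ptrans_zero p).symm
  | succ k ih => rw [pow_succ, ih, ptrans_mul]; push_cast; ring_nf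

lemma ptrans_pow' (a : ZMod p) (k : ℕ) : (ptrans p a) ^ k = ptrans p (k • a) := by
  induction k with
  | zero => simpa using (ptrans_zero p).symm
  | succ k ih => rw [pow_succ, ih, ptrans_mul, succ_nsmul]

lemma ptrans_pow_card [Fact p.Prime] (a : ZMod p) : (ptrans p a) ^ p = 1 := by
  rw [ptrans_pow' p a p]
  have : (p : ℕ) • a = 0 := by
    rw [nsmul_eq_mul, ZMod.natCast_self, zero_mul]
  rw [this, ptrans_zero]

lemma ptrans_zpow (k : ℤ) : (ptrans p 1) ^ k = ptrans p ((k : ℤ) : ZMod p) := by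
  cases k with
  | ofNat k => simpa using ptrans_pow p k
  | negSucc k =>
    rw [zpow_negSucc, ptrans_pow]
    refine inv_eq_iff_mul_eq_one.mpr ?_
    rw [ptrans_mul]
    rw [show ((Int.negSucc k : ℤ) : ZMod p) = -((k+1 : ℕ) : ZMod p) by push_cast; ring]
    rw [show (((k+1:ℕ)) : ZMod p) + -((k+1 : ℕ) : ZMod p) = 0 by ring, ptrans_zero]

lemma ptrans_orderOf [Fact p.Prime] : orderOf (ptrans p 1) = p := by
  have h1 : (ptrans p 1) ^ p = 1 := by
    rw [ptrans_pow, ZMod.natCast_self, ptrans_zero]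
  have h2 : ptrans p 1 ≠ 1 := by
    intro h
    have := congrArg (fun g : Equiv.Perm (OnePoint (ZMod p)) => g (OnePoint.some 0)) h
    simp only [ptrans_some, Equiv.Perm.coe_one, id_eq] at this
    rw [zero_add] at this
    exact one_ne_zero (Option.some_injective _ this)
  have hd := orderOf_dvd_of_pow_eq_one h1
  rcases (Nat.Prime.eq_one_or_self_of_dvd Fact.out _ hd) with h | h
  · exact absurd (orderOf_eq_one_iff.mp h) h2
  · exact h

end ptransLemmas

lemma card_arith (p : ℕ) [Fact p.Prime] (hp2 : p ≠ 2) :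
    (p ^ 3 - p) / 2 = (p + 1) * (p * ((p - 1) / 2)) := by
  obtain ⟨m, hm⟩ := (Nat.Prime.odd_of_ne_two Fact.out hp2)
  subst hm
  have hm2 : (2*m+1-1)/2 = m := by omega
  rw [hm2]
  have h3 : (2*m+1)^3 = 8*m^3+12*m^2+6*m+1 := by ring
  have h4 : (2*m+1+1)*((2*m+1)*m) = 4*m^3+6*m^2+2*m := by ring
  rw [h3, h4]
  generalize m ^ 3 = A
  generalize m ^ 2 = B
  omega

/-- Key structural lemma: conjugates of translations by ∞-stabilizing elements of G
are translations. -/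
lemma conj_ptrans (p : ℕ) [Fact p.Prime] (hp2 : p ≠ 2)
    (G : Subgroup (Equiv.Perm (OnePoint (ZMod p))))
    (htrans : ∀ x y : OnePoint (ZMod p), ∃ g ∈ G, g x = y)
    (hcard : Nat.card G = (p ^ 3 - p) / 2)
    (htransl : ∀ a : ZMod p, ptrans p a ∈ G)
    (g : Equiv.Perm (OnePoint (ZMod p))) (hg : g ∈ G)
    (hginf : g OnePoint.infty = OnePoint.infty)
    (a : ZMod p) : ∃ b : ZMod p, g * ptrans p a * g⁻¹ = ptrans p b := by
  haveI : MulAction.IsPretransitive ↥G (OnePoint (ZMod p)) := by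
    constructor
    intro x y
    obtain ⟨g', hg', h⟩ := htrans x y
    exact ⟨⟨g', hg'⟩, h⟩
  set m := (p - 1) / 2 with hmdef
  set S : Subgroup ↥G := MulAction.stabilizer ↥G (OnePoint.infty : OnePoint (ZMod p)) with hSdef
  have hSindex : S.index = p + 1 := by
    rw [hSdef, MulAction.index_stabilizer_of_transitive]
    have : Nat.card (OnePoint (ZMod p)) = Nat.card (Option (ZMod p)) := rfl
    rw [this, Nat.card_eq_fintype_card, Fintype.card_option, ZMod.card]
  have hScard : Nat.card S = p * m := by
    have h1 : S.index * Nat.card S = Nat.card ↥G := Subgroup.index_mul_card S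
    rw [hSindex, hcard, card_arith p hp2] at h1
    exact Nat.eq_of_mul_eq_mul_left (Nat.succ_pos p) h1
  have hppos : 0 < p := (Fact.out : p.Prime).pos
  have hm1 : 1 ≤ m := by
    have := (Fact.out : p.Prime).two_le
    have h2 := (Fact.out : p.Prime).two_le
    omega
  have hmltp : m < p := by omega
  have hpndvdm : ¬ p ∣ m := fun h => absurd (Nat.le_of_dvd (by omega) h) (by omega)
  -- the generating translation as element of S
  have hσG : ptrans p 1 ∈ G := htransl 1
  have hσS : (⟨ptrans p 1, hσG⟩ : ↥G) ∈ S := by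
    rw [hSdef, MulAction.mem_stabilizer_iff]
    rfl
  set σ : ↥S := ⟨⟨ptrans p 1, hσG⟩, hσS⟩ with hσdef
  have hσord : orderOf σ = p := by
    rw [Subgroup.orderOf_mk, Subgroup.orderOf_mk]
    exact ptrans_orderOf p
  set T : Subgroup ↥S := Subgroup.zpowers σ with hTdef
  have hTcard : Nat.card T = p := by rw [hTdef, Nat.card_zpowers, hσord]
  have hfact : (Nat.card ↥S).factorization p = 1 := by
    rw [hScard, Nat.factorization_mul (by omega) (by omega)]
    simp only [Finsupp.coe_add, Pi.add_apply]
    rw [(Fact.out : p.Prime).factorization_self,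
      Nat.factorization_eq_zero_of_not_dvd hpndvdm]
  set P : Sylow p ↥S := Sylow.ofCard T (by rw [hTcard, hfact, pow_one]) with hPdef
  have hPcoe : (P : Subgroup ↥S) = T := by rw [hPdef]; exact Sylow.coe_ofCard T _
  have hsylcard : Nat.card (Sylow p ↥S) = 1 := by
    have hdvd1 : Nat.card (Sylow p ↥S) ∣ (P : Subgroup ↥S).index := P.card_dvd_index
    have hPindex : (P : Subgroup ↥S).index = m := by
      have h1 : (P : Subgroup ↥S).index * Nat.card (P : Subgroup ↥S) = Nat.card ↥S :=
        Subgroup.index_mul_card _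
      rw [hPcoe, hTcard, hScard] at h1
      exact Nat.eq_of_mul_eq_mul_right hppos (h1.trans (mul_comm p m))
    rw [hPindex] at hdvd1
    have hle : Nat.card (Sylow p ↥S) ≤ m := Nat.le_of_dvd (by omega) hdvd1
    have hmod := card_sylow_modEq_one p ↥S
    have := Nat.ModEq.eq_of_lt_of_lt hmod (by omega) (by omega)
    exact this
  -- the conjugated translation, as an element of S
  have hxG : g * ptrans p a * g⁻¹ ∈ G := mul_mem (mul_mem hg (htransl a)) (inv_mem hg)
  have hginv : g⁻¹ OnePoint.infty = OnePoint.infty := by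
    conv_lhs => rw [← hginf]
    exact g.symm_apply_apply _
  have hxS : (⟨g * ptrans p a * g⁻¹, hxG⟩ : ↥G) ∈ S := by
    rw [hSdef, MulAction.mem_stabilizer_iff]
    show (g * ptrans p a * g⁻¹) OnePoint.infty = OnePoint.infty
    simp only [Equiv.Perm.mul_apply]
    rw [hginv, ptrans_infty, hginf]
  set x : ↥S := ⟨⟨g * ptrans p a * g⁻¹, hxG⟩, hxS⟩ with hxdef
  have hxp : x ^ p = 1 := by
    have h1 : (g * ptrans p a * g⁻¹) ^ p = 1 := by
      rw [conj_pow, ptrans_pow_card, mul_one, mul_inv_cancel]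
    apply Subtype.ext; apply Subtype.ext
    push_cast
    exact h1
  have hpg : IsPGroup p (Subgroup.zpowers x) := by
    intro y
    refine ⟨1, ?_⟩
    obtain ⟨k, hk⟩ := y.2
    apply Subtype.ext
    push_cast
    rw [← hk, pow_one, ← zpow_natCast, ← zpow_mul, mul_comm, zpow_mul, zpow_natCast, hxp,
      one_zpow]
  obtain ⟨Q, hQ⟩ := hpg.exists_le_sylow
  haveI : Subsingleton (Sylow p ↥S) := (Nat.card_eq_one_iff_unique.mp hsylcard).1
  have hQP : Q = P := Subsingleton.elim _ _
  have hxT : x ∈ T := by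
    have : x ∈ (Q : Subgroup ↥S) := hQ (Subgroup.mem_zpowers x)
    rwa [hQP, hPcoe] at this
  obtain ⟨k, hk⟩ := hxT
  refine ⟨((k : ℤ) : ZMod p), ?_⟩
  have := congrArg (fun y : ↥S => ((y : ↥G) : Equiv.Perm (OnePoint (ZMod p)))) hk
  simp only at this
  rw [show g * ptrans p a * g⁻¹ = ((x : ↥G) : Equiv.Perm (OnePoint (ZMod p))) from rfl, ← this]
  push_cast
  exact ptrans_zpow p k

theorem main_case_lambda_is_negInv
    (p : ℕ) [Fact p.Prime] (hp2 : p ≠ 2) (hp3 : p % 4 = 3)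
    (G : Subgroup (Equiv.Perm (OnePoint (ZMod p))))
    (htrans : ∀ x y : OnePoint (ZMod p), ∃ g ∈ G, g x = y)
    (hcard : Nat.card G = (p ^ 3 - p) / 2)
    (htransl : ∀ a : ZMod p, ptrans p a ∈ G)
    (lam : Equiv.Perm (OnePoint (ZMod p))) (hlamG : lam ∈ G)
    (hlam0 : lam (OnePoint.some (0 : ZMod p)) = OnePoint.infty)
    (hlaminf : lam OnePoint.infty = OnePoint.some (0 : ZMod p))
    (hlam2 : orderOf lam = 2)
    (n : ℕ) (hn : Odd n)
    (hlam : ∀ z : ZMod p, z ≠ 0 → lam (OnePoint.some z) = OnePoint.some (-z ^ n))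
    (hdvd : (p - 1) / 2 ∣ n ^ 2 - 1) :
    (p - 1) ∣ (n + 1) ∧ lam = negInvPerm p ∧ negInvPerm p ∈ G := by
  classical
  -- basic facts
  have hppos : 0 < p := (Fact.out : p.Prime).pos
  have hp3' : 3 ≤ p := by have := (Fact.out : p.Prime).two_le; omega
  have hone : (1 : ZMod p) ≠ 0 := one_ne_zero
  have hneg1 : (-1 : ZMod p) ≠ 0 := by simpa using hone
  have h2ne : (2 : ZMod p) ≠ 0 := by
    intro h
    have := (ZMod.natCast_eq_zero_iff 2 p).mp (by exact_mod_cast h)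
    have := Nat.le_of_dvd (by norm_num) this
    omega
  have hn1 : 1 ≤ n := hn.pos
  -- lam is an involution
  have hlamsq : ∀ x, lam (lam x) = x := by
    intro x
    have h := pow_orderOf_eq_one lam
    rw [hlam2] at h
    have := congrArg (fun g : Equiv.Perm (OnePoint (ZMod p)) => g x) h
    simpa [pow_succ, Equiv.Perm.mul_apply] using this
  -- q(q(z)) = z pointwise
  have hq2 : ∀ z : ZMod p, z ≠ 0 → (z ^ n) ^ n = z := by
    intro z hz
    have hzn : z ^ n ≠ 0 := pow_ne_zero _ hz
    have h1 := hlamsq (OnePoint.some z)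
    rw [hlam z hz, hlam (-z ^ n) (by simpa using hzn)] at h1
    have h2 : -(-z ^ n) ^ n = z := Option.some_injective _ h1
    rwa [hn.neg_pow, neg_neg] at h2
  have hqinj : ∀ z w : ZMod p, z ≠ 0 → w ≠ 0 → z ^ n = w ^ n → z = w := by
    intro z w hz hw h
    rw [← hq2 z hz, ← hq2 w hw, h]
  -- the element h = (lam ∘ t₁)³
  set h : Equiv.Perm (OnePoint (ZMod p)) :=
    lam * ptrans p 1 * lam * ptrans p 1 * lam * ptrans p 1 with hhdef
  have hhG : h ∈ G := by
    rw [hhdef]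
    exact mul_mem (mul_mem (mul_mem (mul_mem (mul_mem hlamG (htransl 1)) hlamG)
      (htransl 1)) hlamG) (htransl 1)
  have happly : ∀ x, h x =
      lam (ptrans p 1 (lam (ptrans p 1 (lam (ptrans p 1 x))))) := by
    intro x; rw [hhdef]; simp [Equiv.Perm.mul_apply]
  have hlam1 : lam (OnePoint.some (1 : ZMod p)) = OnePoint.some (-1) := by
    rw [hlam 1 hone, one_pow]
  have hhinf : h OnePoint.infty = OnePoint.infty := by
    rw [happly, ptrans_infty, hlaminf, ptrans_some, zero_add, hlam1, ptrans_some,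
      neg_add_cancel, hlam0]
  have hh0 : h (OnePoint.some (0 : ZMod p)) = OnePoint.some 0 := by
    rw [happly, ptrans_some, zero_add, hlam1, ptrans_some, neg_add_cancel, hlam0,
      ptrans_infty, hlaminf]
  have hhneg1 : h (OnePoint.some (-1 : ZMod p)) = OnePoint.some (-1) := by
    rw [happly, ptrans_some, neg_add_cancel, hlam0, ptrans_infty, hlaminf,
      ptrans_some, zero_add, hlam1]
  -- conjugation of t₁ by h is a translation; deduce h = 1
  obtain ⟨b, hb⟩ := conj_ptrans p hp2 G htrans hcard htransl h hhG hhinf 1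
  have hshift : ∀ z : ZMod p, h (OnePoint.some (z + 1)) = ptrans p b (h (OnePoint.some z)) := by
    intro z
    have := congrArg (fun g : Equiv.Perm (OnePoint (ZMod p)) => g (h (OnePoint.some z))) hb
    simp only [Equiv.Perm.mul_apply] at this
    rw [show h⁻¹ (h (OnePoint.some z)) = OnePoint.some z from h.symm_apply_apply _] at this
    rw [← this, ptrans_some]
  have hb1 : b = 1 := by
    have := hshift (-1)
    rw [neg_add_cancel, hh0, hhneg1, ptrans_some] at this
    have h2 := Option.some_injective _ this
    linear_combination -h2
  rw [hb1] at hshift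
  have hfix : ∀ z : ZMod p, h (OnePoint.some z) = OnePoint.some z := by
    have hnat : ∀ k : ℕ, h (OnePoint.some (k : ZMod p)) = OnePoint.some (k : ZMod p) := by
      intro k
      induction k with
      | zero => exact_mod_cast hh0
      | succ k ih =>
        push_cast
        rw [hshift k, ih, ptrans_some]
    intro z
    have := hnat z.val
    rwa [ZMod.natCast_val, ZMod.cast_id] at this
  have hh1 : h = 1 := by
    ext x
    cases x with
    | infty => rw [hhinf]; rfl
    | coe z => rw [show ((z : OnePoint (ZMod p))) = OnePoint.some z from rfl, hfix]; rfl
  -- key functional equation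
  have hstar : ∀ z : ZMod p, z ≠ 0 → z ≠ 1 → (1 - (1 - z ^ n) ^ n) ^ n = 1 - z := by
    intro z hz0 hz1
    have h1 : h (OnePoint.some (z - 1)) = OnePoint.some (z - 1) := by rw [hh1]; rfl
    rw [happly] at h1
    have hzn1 : z ^ n ≠ 1 := by
      intro hc
      exact hz1 (hqinj z 1 hz0 hone (by rw [hc, one_pow]))
    rw [ptrans_some, show (z - 1 + 1 : ZMod p) = z by ring, hlam z hz0, ptrans_some] at h1
    have hA : -z ^ n + 1 ≠ 0 := by
      intro hc
      apply hzn1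
      linear_combination -hc
    rw [show (-z ^ n + 1 : ZMod p) = -(z^n - 1) by ring] at h1
    have hA' : (z ^ n - 1 : ZMod p) ≠ 0 := by
      intro hc; apply hA; rw [show (-z^n + 1 : ZMod p) = -(z^n-1) by ring, hc, neg_zero]
    rw [hlam (-(z^n-1)) (neg_ne_zero.mpr hA'), ptrans_some] at h1
    set w : ZMod p := -(-(z ^ n - 1)) ^ n + 1 with hwdef
    have hw0 : w ≠ 0 := by
      intro hc
      rw [hc, hlam0] at h1
      exact OnePoint.infty_ne_coe _ h1
    rw [hlam w hw0] at h1
    have h2 : -w ^ n + 1 - 1 = z - 1 := by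
      have := Option.some_injective _ h1
      linear_combination this
    have hwe : w = 1 - (1 - z ^ n) ^ n := by
      rw [hwdef, show (1 - z^n : ZMod p) = -(z^n-1) by ring]; ring
    rw [hwe] at h2
    linear_combination -h2
  -- elements with z^n = z are only ±1
  have hF : ∀ z : ZMod p, z ≠ 0 → z ^ n = z → z = 1 ∨ z = -1 := by
    intro z hz0 hzfix
    by_cases hz1 : z = 1
    · exact Or.inl hz1
    · right
      have key : ∀ u : ZMod p, u ≠ 0 → u ≠ 1 → u ^ n = u → (2 : ZMod p) * (1 - u) ^ n = 1 := by
        intro u hu0 hu1 hufix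
        have hstar' := hstar u hu0 hu1
        rw [hufix] at hstar'
        have h1u : (1 - u : ZMod p) ≠ 0 := fun hc => hu1 (by linear_combination -hc)
        have hy0 : ((1 - u : ZMod p)) ^ n ≠ 0 := pow_ne_zero _ h1u
        have h1y : (1 - (1-u)^n : ZMod p) ≠ 0 := by
          intro hc
          rw [show (1 - (1-u)^n : ZMod p) = -((1-u)^n - 1) by ring] at hc
          have : ((1-u : ZMod p))^n = 1 := by linear_combination -hc
          have := hqinj (1-u) 1 h1u hone (by rw [this, one_pow])
          exact hu0 (by linear_combination -this)
        -- (1 - y)^n = 1 - u where y = (1-u)^n, so y = (1-y)^{n²} ... gives 2y = 1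
        have h2' : ((1 - (1-u)^n : ZMod p)) ^ n = 1 - u := hstar'
        have h4 : (1 - (1-u)^n : ZMod p) = (1-u)^n := by
          conv_lhs => rw [← hq2 _ h1y, h2']
        linear_combination -h4
      have hm1n : ((-1 : ZMod p)) ^ n = -1 := by
        rw [hn.neg_pow, one_pow]
      have hne11 : (-1 : ZMod p) ≠ 1 := by
        intro hc
        apply h2ne
        linear_combination -hc
      have k1 := key z hz0 hz1 hzfix
      have k2 := key (-1) hneg1 hne11 hm1n
      have : ((1 - z : ZMod p)) ^ n = (1 - (-1) : ZMod p) ^ n := by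
        apply mul_left_cancel₀ h2ne
        rw [k1, k2]
      have h1z : (1 - z : ZMod p) ≠ 0 := fun hc => hz1 (by linear_combination -hc)
      have := hqinj _ _ h1z (by norm_num [h2ne] : (1 - (-1) : ZMod p) ≠ 0) this
      linear_combination -this
  -- now the divisibility
  have hmodd : ((p-1)/2) % 2 = 1 := by omega
  have hg1 : Nat.gcd ((p-1)/2) (n-1) = 1 := by
    set g := Nat.gcd ((p-1)/2) (n-1) with hgdef
    have hgdvdm : g ∣ (p-1)/2 := Nat.gcd_dvd_left _ _
    have hgodd : ¬ 2 ∣ g := by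
      intro h2g
      have := h2g.trans hgdvdm
      omega
    have hgdvd : g ∣ p - 1 := hgdvdm.trans ⟨2, by omega⟩
    obtain ⟨gen, hgen⟩ := IsCyclic.exists_ofOrder_eq_natCard (α := (ZMod p)ˣ)
    have hcardu : Nat.card (ZMod p)ˣ = p - 1 := by
      rw [Nat.card_units, Nat.card_zmod]
    rw [hcardu] at hgen
    set ζ : (ZMod p)ˣ := gen ^ ((p-1)/g) with hζdef
    have hgpos : 0 < g := Nat.gcd_pos_of_pos_left _ (by omega)
    obtain ⟨c, hc⟩ := hgdvd
    have hcpos : 0 < c := by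
      rcases Nat.eq_zero_or_pos c with h | h
      · subst h; omega
      · exact h
    have hζord : orderOf ζ = g := by
      rw [hζdef, orderOf_pow, hgen, hc, Nat.mul_div_cancel_left _ hgpos]
      rw [Nat.gcd_eq_right ⟨g, mul_comm g c⟩, Nat.mul_div_cancel _ hcpos]
    have hζfix : (ζ : ZMod p) ^ n = (ζ : ZMod p) := by
      have hdvd2 : g ∣ n - 1 := Nat.gcd_dvd_right _ _
      have h1 : ζ ^ (n-1) = 1 := orderOf_dvd_iff_pow_eq_one.mp (hζord ▸ hdvd2)
      have h2 : ζ ^ n = ζ := by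
        conv_lhs => rw [show n = (n-1)+1 by omega]
        rw [pow_succ, h1, one_mul]
      calc (ζ : ZMod p) ^ n = ((ζ ^ n : (ZMod p)ˣ) : ZMod p) := by push_cast; ring
        _ = (ζ : ZMod p) := by rw [h2]
    rcases hF (ζ : ZMod p) (Units.ne_zero ζ) hζfix with h1 | h1
    · have hζ1 : ζ = 1 := Units.ext (by rw [h1]; rfl)
      rw [← hζord, hζ1, orderOf_one]
    · have hζ1 : ζ = -1 := Units.ext (by rw [h1]; simp)
      have h2 : orderOf ζ ∣ 2 := orderOf_dvd_of_pow_eq_one (by rw [hζ1, neg_one_sq])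
      rw [hζord] at h2
      rcases (Nat.dvd_prime Nat.prime_two).mp h2 with h | h
      · exact h
      · omega
  have hmdvd : (p-1)/2 ∣ (n+1) := by
    have hfactor : n^2 - 1 = (n-1) * (n+1) := by
      obtain ⟨k, rfl⟩ : ∃ k, n = k + 1 := ⟨n-1, by omega⟩
      have h1 : (k+1)^2 = k^2+2*k+1 := by ring
      have h2 : (k+1-1)*(k+1+1) = k^2+2*k := by rw [Nat.add_sub_cancel]; ring
      rw [h1, h2]
      generalize k^2 = A
      omega
    rw [hfactor] at hdvd
    exact (Nat.Coprime.dvd_of_dvd_mul_left hg1 hdvd)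
  have hpm1 : (p - 1) ∣ (n + 1) := by
    have h2m : p - 1 = 2 * ((p-1)/2) := by omega
    rw [h2m]
    refine Nat.Coprime.mul_dvd_of_dvd_of_dvd ?_ ?_ hmdvd
    · exact (Nat.prime_two.coprime_iff_not_dvd).mpr (by omega)
    · obtain ⟨j, rfl⟩ := hn; exact ⟨j+1, by ring⟩
  have hEq : lam = negInvPerm p := by
    have hpow : ∀ z : ZMod p, z ≠ 0 → z ^ n = z⁻¹ := by
      intro z hz
      obtain ⟨k, hk⟩ := hpm1
      have h1 : z ^ (n+1) = 1 := by
        rw [hk, pow_mul, ZMod.pow_card_sub_one_eq_one hz, one_pow]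
      have h2 : z ^ n * z = 1 := by rw [← pow_succ, h1]
      exact eq_inv_of_mul_eq_one_left h2
    ext x
    cases x with
    | infty =>
      rw [hlaminf]
      show OnePoint.some (0 : ZMod p) = negInvFun p Option.none
      rfl
    | coe z =>
      by_cases hz : z = 0
      · subst hz
        rw [show ((0 : ZMod p) : OnePoint (ZMod p)) = OnePoint.some 0 from rfl, hlam0]
        show OnePoint.infty = negInvFun p (Option.some 0)
        simp [negInvFun]
        rfl
      · rw [show ((z : ZMod p) : OnePoint (ZMod p)) = OnePoint.some z from rfl, hlam z hz,
          hpow z hz]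
        show OnePoint.some (-z⁻¹ : ZMod p) = negInvFun p (Option.some z)
        simp [negInvFun, hz]
        rfl
  exact ⟨hpm1, hEq, hEq ▸ hlamG⟩
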